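/- For a differential-drive robot with wheel-speed bound w_max > 0 and half-axle length ρ > 0, starting from any configuration g = (p, θ₀) ∈ ℝ² × ℝ, the area of the small-time reachable set satisfies liminf_{t→0⁺} Area(R_t(g)) / t³ ≥ 2 w_max³ / (3ρ). -/

import Mathlib

open MeasureTheory Filter Topology Real

noncomputable section

/-- The plane `ℝ²` with the Euclidean norm. -/
abbrev Plane : Type := EuclideanSpace ℝ (Fin 2)

/-- A differential-drive (DD) trajectory with wheel-speed bound `wmax` and half-axle
length `ρ`: coordinates `x y θ` driven by measurable wheel-speed controls `wl, wr`
bounded by `wmax`, satisfying (in integral form) `x' = (wl+wr)/2 ⬝ cos θ`,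
`y' = (wl+wr)/2 ⬝ sin θ`, `θ' = (wr - wl)/(2ρ)`. -/
def IsDDTraj (wmax ρ : ℝ) (x y θ : ℝ → ℝ) : Prop :=
  ∃ wl wr : ℝ → ℝ, Measurable wl ∧ Measurable wr ∧
    (∀ t, |wl t| ≤ wmax) ∧ (∀ t, |wr t| ≤ wmax) ∧
    (∀ t, x t = x 0 + ∫ s in (0:ℝ)..t, (wl s + wr s) / 2 * Real.cos (θ s)) ∧
    (∀ t, y t = y 0 + ∫ s in (0:ℝ)..t, (wl s + wr s) / 2 * Real.sin (θ s)) ∧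
    (∀ t, θ t = θ 0 + ∫ s in (0:ℝ)..t, (wr s - wl s) / (2 * ρ))

/-- Minimum travel time of a DD robot from configuration `(p, θ₀)` to the point `q`. -/
def tauDD (wmax ρ : ℝ) (p : Plane) (θ₀ : ℝ) (q : Plane) : ℝ :=
  sInf {T : ℝ | 0 ≤ T ∧ ∃ x y θ : ℝ → ℝ, IsDDTraj wmax ρ x y θ ∧
    x 0 = p 0 ∧ y 0 = p 1 ∧ θ 0 = θ₀ ∧ x T = q 0 ∧ y T = q 1}

/-- Reachable set at time `t` of a DD robot starting at configuration `(p, θ₀)`. -/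
def reachDD (wmax ρ : ℝ) (p : Plane) (θ₀ : ℝ) (t : ℝ) : Set Plane :=
  {q | tauDD wmax ρ p θ₀ q ≤ t}


section AuxDD
open Set intervalIntegral

lemma stepIntegrable (s C D a b : ℝ) :
    IntervalIntegrable (fun v => if v < s then C else D) volume a b := by
  rw [intervalIntegrable_iff]
  have : IsFiniteMeasure (volume.restrict (Set.uIoc a b)) := by
    constructor; rw [Measure.restrict_apply_univ]; exact measure_Ioc_lt_top
  apply (integrable_const (|C| + |D|)).mono'
  · exact ((Measurable.ite measurableSet_Iio measurable_const measurable_const)).aestronglyMeasurable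
  · filter_upwards with v
    by_cases h : v < s
    · simp only [h, if_true, Real.norm_eq_abs]
      exact le_add_of_nonneg_right (abs_nonneg _)
    · simp only [h, if_false, Real.norm_eq_abs]
      exact le_add_of_nonneg_left (abs_nonneg _)

lemma ae_ne (s : ℝ) : ∀ᵐ v : ℝ, v ≠ s := by
  rw [ae_iff]
  have : {x : ℝ | ¬ x ≠ s} = {s} := by ext x; simp
  rw [this]; exact measure_singleton s

lemma integral_step {s : ℝ} (hs : 0 ≤ s) (C D u : ℝ) :
    ∫ v in (0:ℝ)..u, (if v < s then C else D) = C * min u s + D * (u - min u s) := by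
  rcases le_total u s with h | h
  · rw [min_eq_left h, intervalIntegral.integral_congr_ae ?_ (g := fun _ => C)]
    · simp [mul_comm]
    · filter_upwards [ae_ne s] with v hv hvm
      rw [Set.mem_uIoc] at hvm
      have : v < s := by
        rcases hvm with ⟨_, h2⟩ | ⟨_, h2⟩
        · exact lt_of_le_of_ne (h2.trans h) hv
        · exact lt_of_le_of_ne (h2.trans hs) hv
      simp [this]
  · rw [min_eq_right h,
      ← integral_add_adjacent_intervals (stepIntegrable s C D 0 s) (stepIntegrable s C D s u)]
    have h1 : ∫ v in (0:ℝ)..s, (if v < s then C else D) = C * s := by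
      rw [intervalIntegral.integral_congr_ae ?_ (g := fun _ => C)]
      · simp [mul_comm]
      · filter_upwards [ae_ne s] with v hv hvm
        rw [Set.mem_uIoc] at hvm
        have : v < s := by
          rcases hvm with ⟨_, h2⟩ | ⟨h2, h3⟩
          · exact lt_of_le_of_ne h2 hv
          · linarith
        simp [this]
    have h2 : ∫ v in s..u, (if v < s then C else D) = D * (u - s) := by
      rw [integral_congr (g := fun _ => D) ?_]
      · simp [mul_comm]
      · intro v hv
        rw [Set.uIcc_of_le h] at hv
        have : ¬ v < s := not_lt.2 hv.1
        simp [this]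
    rw [h1, h2]


lemma tau_le {wmax ρ : ℝ} (hw : 0 < wmax) (hρ : 0 < ρ) (p : Plane) (θ₀ : ℝ)
    {t φ d : ℝ} (h : ρ * |φ| + |d| ≤ wmax * t) (q : Plane)
    (hq0 : q 0 = p 0 + d * Real.cos (θ₀ + φ)) (hq1 : q 1 = p 1 + d * Real.sin (θ₀ + φ)) :
    tauDD wmax ρ p θ₀ q ≤ t := by
  set σ : ℝ := if 0 ≤ φ then 1 else -1 with hσdef
  set τ : ℝ := if 0 ≤ d then 1 else -1 with hτdef
  have hσφ : σ * |φ| = φ := by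
    rw [hσdef]; rcases le_or_gt 0 φ with h' | h'
    · simp [h', abs_of_nonneg h']
    · simp [not_le.2 h', abs_of_neg h']
  have hτd : τ * |d| = d := by
    rw [hτdef]; rcases le_or_gt 0 d with h' | h'
    · simp [h', abs_of_nonneg h']
    · simp [not_le.2 h', abs_of_neg h']
  have hσ1 : |σ| = 1 := by rw [hσdef]; split <;> simp
  have hτ1 : |τ| = 1 := by rw [hτdef]; split <;> simp
  set s : ℝ := ρ * |φ| / wmax with hsdef
  have hs : 0 ≤ s := div_nonneg (mul_nonneg hρ.le (abs_nonneg _)) hw.le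
  set T : ℝ := s + |d| / wmax with hTdef
  have hsT : s ≤ T := le_add_of_nonneg_right (div_nonneg (abs_nonneg _) hw.le)
  have hT0 : 0 ≤ T := hs.trans hsT
  have hTt : T ≤ t := by
    rw [hTdef, hsdef, ← add_div, div_le_iff₀ hw]
    linarith [h]
  set wl : ℝ → ℝ := fun u => if u < s then -σ * wmax else τ * wmax with hwl
  set wr : ℝ → ℝ := fun u => if u < s then σ * wmax else τ * wmax with hwr
  set θf : ℝ → ℝ := fun u => θ₀ + σ * wmax / ρ * min u s with hθf
  have hθs : ∀ v, ¬ v < s → θf v = θ₀ + φ := by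
    intro v hv
    rw [hθf]; simp only
    rw [min_eq_right (not_lt.1 hv), hsdef]
    field_simp
    linear_combination hσφ
  set x : ℝ → ℝ := fun u => p 0 + ∫ v in (0:ℝ)..u, (wl v + wr v) / 2 * Real.cos (θf v) with hx
  set y : ℝ → ℝ := fun u => p 1 + ∫ v in (0:ℝ)..u, (wl v + wr v) / 2 * Real.sin (θf v) with hy
  have hx0 : x 0 = p 0 := by rw [hx]; simp
  have hy0 : y 0 = p 1 := by rw [hy]; simp
  have hcosint : ∀ v, (wl v + wr v) / 2 * Real.cos (θf v)
      = if v < s then 0 else τ * wmax * Real.cos (θ₀ + φ) := by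
    intro v
    by_cases hv : v < s
    · simp [hwl, hwr, hv]
    · simp only [hwl, hwr, hv, if_false, hθs v hv]
      ring
  have hsinint : ∀ v, (wl v + wr v) / 2 * Real.sin (θf v)
      = if v < s then 0 else τ * wmax * Real.sin (θ₀ + φ) := by
    intro v
    by_cases hv : v < s
    · simp [hwl, hwr, hv]
    · simp only [hwl, hwr, hv, if_false, hθs v hv]
      ring
  have hminT : min T s = s := min_eq_right hsT
  have hxT : x T = q 0 := by
    rw [hx]; simp only
    rw [show (fun v => (wl v + wr v) / 2 * Real.cos (θf v))
        = fun v => if v < s then 0 else τ * wmax * Real.cos (θ₀ + φ) from funext hcosint]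
    rw [integral_step hs, hminT, hq0, hTdef]
    have : τ * wmax * Real.cos (θ₀ + φ) * (s + |d| / wmax - s) = d * Real.cos (θ₀ + φ) := by
      field_simp
      linear_combination Real.cos (θ₀ + φ) * hτd
    rw [this]; ring
  have hyT : y T = q 1 := by
    rw [hy]; simp only
    rw [show (fun v => (wl v + wr v) / 2 * Real.sin (θf v))
        = fun v => if v < s then 0 else τ * wmax * Real.sin (θ₀ + φ) from funext hsinint]
    rw [integral_step hs, hminT, hq1, hTdef]
    have : τ * wmax * Real.sin (θ₀ + φ) * (s + |d| / wmax - s) = d * Real.sin (θ₀ + φ) := by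
      field_simp
      linear_combination Real.sin (θ₀ + φ) * hτd
    rw [this]; ring
  have hmem : T ∈ {T : ℝ | 0 ≤ T ∧ ∃ x y θ : ℝ → ℝ, IsDDTraj wmax ρ x y θ ∧
      x 0 = p 0 ∧ y 0 = p 1 ∧ θ 0 = θ₀ ∧ x T = q 0 ∧ y T = q 1} := by
    refine ⟨hT0, x, y, θf, ⟨wl, wr, ?_, ?_, ?_, ?_, ?_, ?_, ?_⟩, hx0, hy0, ?_, hxT, hyT⟩
    · exact Measurable.ite measurableSet_Iio measurable_const measurable_const
    · exact Measurable.ite measurableSet_Iio measurable_const measurable_const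
    · intro u; rw [hwl]; simp only
      split <;> rw [abs_mul] <;> simp [hσ1, hτ1, abs_of_pos hw]
    · intro u; rw [hwr]; simp only
      split <;> rw [abs_mul] <;> simp [hσ1, hτ1, abs_of_pos hw]
    · intro u
      simp only [hx, intervalIntegral.integral_same, add_zero]
    · intro u
      simp only [hy, intervalIntegral.integral_same, add_zero]
    · intro u
      have : ∀ v, (wr v - wl v) / (2 * ρ) = if v < s then σ * wmax / ρ else 0 := by
        intro v; by_cases hv : v < s
        · simp only [hwl, hwr, hv, if_true]; field_simp; ring
        · simp [hwl, hwr, hv]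
      rw [show (fun v => (wr v - wl v) / (2 * ρ)) = fun v => if v < s then σ * wmax / ρ else 0
          from funext this]
      rw [integral_step hs]
      simp only [hθf]
      rw [min_eq_left (le_refl 0 |>.trans hs)]
      ring_nf
    · simp only [hθf]; rw [min_eq_left (le_refl 0 |>.trans hs)]; ring
  have hbdd : BddBelow {T : ℝ | 0 ≤ T ∧ ∃ x y θ : ℝ → ℝ, IsDDTraj wmax ρ x y θ ∧
      x 0 = p 0 ∧ y 0 = p 1 ∧ θ 0 = θ₀ ∧ x T = q 0 ∧ y T = q 1} :=
    ⟨0, fun _ hT => hT.1⟩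
  exact le_trans (csInf_le hbdd hmem) hTt


lemma poly_int {c ρ : ℝ} (hρ : 0 < ρ) :
    ∫ r in (0:ℝ)..c, r * (2 * (c - r) / ρ) = c ^ 3 / (3 * ρ) := by
  have : ∀ r : ℝ, r * (2 * (c - r) / ρ) = (2 * c / ρ) * r - (2 / ρ) * r ^ 2 := by
    intro r; field_simp
  simp only [this]
  rw [intervalIntegral.integral_sub ((intervalIntegral.intervalIntegrable_id.const_mul _))
      ((intervalIntegral.intervalIntegrable_pow 2).const_mul _),
    intervalIntegral.integral_const_mul, intervalIntegral.integral_const_mul,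
    integral_id, integral_pow]
  field_simp; ring

lemma lint_slice {c ρ : ℝ} (hρ : 0 < ρ) (A : Set (ℝ × ℝ)) (hA : MeasurableSet A)
    (hslice : ∀ r : ℝ, volume {ψ : ℝ | (r, ψ) ∈ A}
      = (Set.Ioo (0:ℝ) c).indicator (fun r => ENNReal.ofReal (2 * (c - r) / ρ)) r) :
    ∫⁻ z in A, ENNReal.ofReal z.1 = ENNReal.ofReal (c ^ 3 / (3 * ρ)) := by
  have hmeas : Measurable (fun z : ℝ × ℝ => A.indicator (fun z : ℝ × ℝ => ENNReal.ofReal z.1) z) :=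
    (Measurable.indicator (ENNReal.measurable_ofReal.comp measurable_fst) hA)
  rw [← lintegral_indicator hA, MeasureTheory.Measure.volume_eq_prod, lintegral_prod _ hmeas.aemeasurable]
  have hinner : ∀ r : ℝ, ∫⁻ ψ, A.indicator (fun z : ℝ × ℝ => ENNReal.ofReal z.1) (r, ψ)
      = (Set.Ioo (0:ℝ) c).indicator (fun r => ENNReal.ofReal r * ENNReal.ofReal (2 * (c - r) / ρ)) r := by
    intro r
    have h1 : ∀ ψ : ℝ, A.indicator (fun z : ℝ × ℝ => ENNReal.ofReal z.1) (r, ψ)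
        = {ψ : ℝ | (r, ψ) ∈ A}.indicator (fun _ => ENNReal.ofReal r) ψ := by
      intro ψ
      by_cases h : (r, ψ) ∈ A
      · simp [Set.indicator_apply, h]
      · simp [Set.indicator_apply, h]
    simp only [h1]
    rw [lintegral_indicator_const
        (show MeasurableSet {ψ : ℝ | (r, ψ) ∈ A} from measurable_prodMk_left hA), hslice r]
    by_cases hr : r ∈ Set.Ioo (0:ℝ) c
    · rw [Set.indicator_of_mem hr, Set.indicator_of_mem hr]
    · rw [Set.indicator_of_notMem hr, Set.indicator_of_notMem hr, mul_zero]
  simp only [hinner]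
  rw [lintegral_indicator measurableSet_Ioo]
  have : ∀ r ∈ Set.Ioo (0:ℝ) c, ENNReal.ofReal r * ENNReal.ofReal (2 * (c - r) / ρ)
      = ENNReal.ofReal (r * (2 * (c - r) / ρ)) := by
    intro r hr
    rw [← ENNReal.ofReal_mul hr.1.le]
  rw [setLIntegral_congr_fun measurableSet_Ioo this]
  have hcont : Continuous (fun r : ℝ => r * (2 * (c - r) / ρ)) := by continuity
  rw [← ofReal_integral_eq_lintegral_ofReal
      ((hcont.integrableOn_Icc).mono_set Set.Ioo_subset_Icc_self) ?_]
  · rw [← MeasureTheory.integral_Ioc_eq_integral_Ioo]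
    rcases le_or_gt 0 c with hc | hc
    · rw [← intervalIntegral.integral_of_le hc, poly_int hρ]
    · rw [Set.Ioc_eq_empty (by linarith), Measure.restrict_empty, integral_zero_measure]
      have : c ^ 3 / (3 * ρ) < 0 :=
        div_neg_of_neg_of_pos (Odd.pow_neg (by decide) hc) (by linarith)
      rw [ENNReal.ofReal_of_nonpos this.le]
      simp
  · rw [EventuallyLE, ae_restrict_iff' measurableSet_Ioo]
    filter_upwards with r hr
    simp only [Pi.zero_apply]
    exact mul_nonneg hr.1.le (div_nonneg (by linarith [hr.2]) hρ.le)


def Aplus (c a ρ : ℝ) : Set (ℝ × ℝ) :=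
  {z | (-a < z.2 ∧ z.2 < a) ∧ 0 < z.1 ∧ z.1 < c - ρ * |z.2|}

def Aminus (c a ρ : ℝ) : Set (ℝ × ℝ) :=
  {z | ((-π < z.2 ∧ z.2 < -(π - a)) ∨ (π - a < z.2 ∧ z.2 < π)) ∧
    0 < z.1 ∧ z.1 < c - ρ * (π - |z.2|)}

lemma measurable_Aplus (c a ρ : ℝ) : MeasurableSet (Aplus c a ρ) := by
  apply MeasurableSet.inter
  · exact (measurableSet_lt measurable_const measurable_snd).inter
      (measurableSet_lt measurable_snd measurable_const)
  · exact (measurableSet_lt measurable_const measurable_fst).inter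
      (measurableSet_lt measurable_fst
        (measurable_const.sub (measurable_const.mul measurable_snd.abs)))

lemma measurable_Aminus (c a ρ : ℝ) : MeasurableSet (Aminus c a ρ) := by
  apply MeasurableSet.inter
  · apply MeasurableSet.union
    · exact (measurableSet_lt measurable_const measurable_snd).inter
        (measurableSet_lt measurable_snd measurable_const)
    · exact (measurableSet_lt measurable_const measurable_snd).inter
        (measurableSet_lt measurable_snd measurable_const)
  · exact (measurableSet_lt measurable_const measurable_fst).inter
      (measurableSet_lt measurable_fst
        (measurable_const.sub (measurable_const.mul
          (measurable_const.sub measurable_snd.abs))))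

lemma slice_plus {c ρ : ℝ} (hρ : 0 < ρ) (hc : 0 < c) (r : ℝ) :
    volume {ψ : ℝ | (r, ψ) ∈ Aplus c (c/ρ) ρ}
      = (Set.Ioo (0:ℝ) c).indicator (fun r => ENNReal.ofReal (2 * (c - r) / ρ)) r := by
  by_cases hr : r ∈ Set.Ioo (0:ℝ) c
  · rw [Set.indicator_of_mem hr]
    have : {ψ : ℝ | (r, ψ) ∈ Aplus c (c/ρ) ρ} = Set.Ioo (-((c - r)/ρ)) ((c - r)/ρ) := by
      ext ψ
      simp only [Aplus, Set.mem_setOf_eq, Set.mem_Ioo]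
      constructor
      · rintro ⟨-, -, h4⟩
        have : |ψ| < (c - r)/ρ := by rw [lt_div_iff₀ hρ]; linarith [abs_nonneg ψ]
        exact abs_lt.1 this
      · rintro ⟨h1, h2⟩
        have hb : |ψ| < (c - r)/ρ := abs_lt.2 ⟨h1, h2⟩
        have hba : (c - r)/ρ < c/ρ := by gcongr; linarith [hr.1]
        have hba2 : |ψ| < c/ρ := hb.trans hba
        rw [abs_lt] at hba2
        refine ⟨⟨hba2.1, hba2.2⟩, hr.1, ?_⟩
        have : ρ * |ψ| < c - r := by rw [← lt_div_iff₀' hρ]; exact hb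
        linarith
    rw [this, Real.volume_Ioo]
    congr 1; field_simp; ring
  · rw [Set.indicator_of_notMem hr]
    have : {ψ : ℝ | (r, ψ) ∈ Aplus c (c/ρ) ρ} = ∅ := by
      ext ψ
      simp only [Aplus, Set.mem_setOf_eq, Set.mem_empty_iff_false, iff_false]
      rintro ⟨h1, h2, h3⟩
      rw [Set.mem_Ioo, not_and_or] at hr
      push_neg at hr
      rcases hr with hr | hr
      · linarith
      · nlinarith [abs_nonneg ψ, mul_nonneg hρ.le (abs_nonneg ψ)]
    rw [this]; simp

lemma slice_minus {c ρ : ℝ} (hρ : 0 < ρ) (hc : 0 < c) (ha : c/ρ ≤ π/2) (r : ℝ) :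
    volume {ψ : ℝ | (r, ψ) ∈ Aminus c (c/ρ) ρ}
      = (Set.Ioo (0:ℝ) c).indicator (fun r => ENNReal.ofReal (2 * (c - r) / ρ)) r := by
  have hπ := Real.pi_pos
  by_cases hr : r ∈ Set.Ioo (0:ℝ) c
  · rw [Set.indicator_of_mem hr]
    obtain ⟨b, hb⟩ : ∃ b : ℝ, b = (c - r)/ρ := ⟨_, rfl⟩
    have hb0 : 0 < b := hb ▸ div_pos (by linarith [hr.2]) hρ
    have hba : b < c/ρ := by
      rw [hb]; gcongr; linarith [hr.1]
    have hbπ : b < π/2 := lt_of_lt_of_le hba ha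
    have : {ψ : ℝ | (r, ψ) ∈ Aminus c (c/ρ) ρ}
        = Set.Ioo (-π) (-(π - b)) ∪ Set.Ioo (π - b) π := by
      ext ψ
      simp only [Aminus, Set.mem_setOf_eq, Set.mem_union, Set.mem_Ioo]
      constructor
      · rintro ⟨hU, -, h4⟩
        have habs : π - b < |ψ| := by
          have h5 : π - |ψ| < b := by rw [hb, lt_div_iff₀' hρ]; linarith
          linarith
        rcases hU with ⟨hu1, hu2⟩ | ⟨hu1, hu2⟩
        · left
          have hψneg : ψ < 0 := by nlinarith [ha]
          rw [abs_of_neg hψneg] at habs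
          exact ⟨hu1, by linarith⟩
        · right
          have hψpos : 0 < ψ := by nlinarith [ha]
          rw [abs_of_pos hψpos] at habs
          exact ⟨by linarith, hu2⟩
      · rintro (⟨h1, h2⟩ | ⟨h1, h2⟩)
        · have hψneg : ψ < 0 := by nlinarith
          have habs : π - b < |ψ| := by rw [abs_of_neg hψneg]; linarith
          refine ⟨Or.inl ⟨h1, by nlinarith⟩, hr.1, ?_⟩
          have : π - |ψ| < b := by linarith
          rw [hb] at this
          calc r = c - ρ * ((c - r)/ρ) := by field_simp; ring
          _ < c - ρ * (π - |ψ|) := by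
              have := mul_lt_mul_of_pos_left this hρ
              linarith
        · have hψpos : 0 < ψ := by nlinarith
          have habs : π - b < |ψ| := by rw [abs_of_pos hψpos]; linarith
          refine ⟨Or.inr ⟨by nlinarith, h2⟩, hr.1, ?_⟩
          have : π - |ψ| < b := by linarith
          rw [hb] at this
          calc r = c - ρ * ((c - r)/ρ) := by field_simp; ring
          _ < c - ρ * (π - |ψ|) := by
              have := mul_lt_mul_of_pos_left this hρ
              linarith
    rw [this, measure_union ?_ measurableSet_Ioo, Real.volume_Ioo, Real.volume_Ioo,
      ← ENNReal.ofReal_add (by linarith) (by linarith)]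
    · congr 1; rw [hb]; field_simp; ring
    · rw [Set.disjoint_left]
      rintro ψ ⟨-, h2⟩ ⟨h3, -⟩
      linarith
  · rw [Set.indicator_of_notMem hr]
    have : {ψ : ℝ | (r, ψ) ∈ Aminus c (c/ρ) ρ} = ∅ := by
      ext ψ
      simp only [Aminus, Set.mem_setOf_eq, Set.mem_empty_iff_false, iff_false]
      rintro ⟨h1, h2, h3⟩
      rw [Set.mem_Ioo, not_and_or] at hr
      push_neg at hr
      have habs : |ψ| ≤ π := by
        rcases h1 with ⟨hu1, hu2⟩ | ⟨hu1, hu2⟩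
        · rw [abs_le]; constructor <;> nlinarith [ha, hπ]
        · rw [abs_le]; constructor <;> nlinarith [ha, hπ]
      rcases hr with hr | hr
      · linarith
      · nlinarith [mul_nonneg hρ.le (sub_nonneg.2 habs)]
    rw [this]; simp


lemma volume_reach_ge {wmax ρ : ℝ} (hw : 0 < wmax) (hρ : 0 < ρ) (p : Plane) (θ₀ : ℝ)
    {t : ℝ} (ht : 0 < t) (ha : wmax * t / ρ ≤ π / 2) :
    ENNReal.ofReal (2 * (wmax * t) ^ 3 / (3 * ρ)) ≤ volume (reachDD wmax ρ p θ₀ t) := by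
  have hπ := Real.pi_pos
  obtain ⟨c, hcdef⟩ : ∃ c : ℝ, c = wmax * t := ⟨_, rfl⟩
  have hc : 0 < c := hcdef ▸ mul_pos hw ht
  have ha' : c / ρ ≤ π / 2 := hcdef ▸ ha
  have haρ : c / ρ > 0 := div_pos hc hρ
  set A : Set (ℝ × ℝ) := Aplus c (c/ρ) ρ ∪ Aminus c (c/ρ) ρ with hAdef
  have hAmeas : MeasurableSet A := (measurable_Aplus _ _ _).union (measurable_Aminus _ _ _)
  have hAsub : A ⊆ polarCoord.target := by
    rintro z (⟨⟨h1, h2⟩, h3, -⟩ | ⟨hU, h3, -⟩) <;>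
      refine Set.mem_prod.2 ⟨Set.mem_Ioi.2 h3, Set.mem_Ioo.2 ?_⟩
    · constructor <;> nlinarith
    · rcases hU with ⟨h1, h2⟩ | ⟨h1, h2⟩ <;> constructor <;> nlinarith
  -- the rotation-translation map
  set L : ℝ × ℝ →L[ℝ] ℝ × ℝ := LinearMap.toContinuousLinearMap
    (Matrix.toLin (Module.Basis.finTwoProd ℝ) (Module.Basis.finTwoProd ℝ)
      !![Real.cos θ₀, -Real.sin θ₀; Real.sin θ₀, Real.cos θ₀]) with hLdef
  set E : ℝ × ℝ → ℝ × ℝ := fun z => (p 0, p 1) + L z with hEdef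
  have hEapp : ∀ z : ℝ × ℝ, E z = (p 0 + (Real.cos θ₀ * z.1 - Real.sin θ₀ * z.2),
      p 1 + (Real.sin θ₀ * z.1 + Real.cos θ₀ * z.2)) := by
    intro z
    rw [hEdef]
    simp only [hLdef, Matrix.toLin_finTwoProd_toContinuousLinearMap]
    simp [Prod.ext_iff, ContinuousLinearMap.prod_apply]
    constructor <;> ring
  have hE : ∀ z : ℝ × ℝ, HasFDerivAt E L z := fun z => (L.hasFDerivAt).const_add _
  have hEinj : Function.Injective E := by
    intro z w h
    rw [hEapp, hEapp, Prod.ext_iff] at h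
    obtain ⟨h1, h2⟩ := h
    simp only at h1 h2
    have hpyth := Real.sin_sq_add_cos_sq θ₀
    have e1 : z.1 = w.1 := by
      linear_combination Real.cos θ₀ * h1 + Real.sin θ₀ * h2 + (w.1 - z.1) * hpyth
    have e2 : z.2 = w.2 := by
      linear_combination (-Real.sin θ₀) * h1 + Real.cos θ₀ * h2 + (w.2 - z.2) * hpyth
    exact Prod.ext e1 e2
  obtain ⟨f, hfdef⟩ : ∃ f : ℝ × ℝ → ℝ × ℝ, f = E ∘ polarCoord.symm := ⟨_, rfl⟩
  obtain ⟨f', hf'def⟩ : ∃ f' : ℝ × ℝ → (ℝ × ℝ →L[ℝ] ℝ × ℝ), f' = fun z =>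
    L.comp (LinearMap.toContinuousLinearMap (Matrix.toLin (Module.Basis.finTwoProd ℝ) (Module.Basis.finTwoProd ℝ)
      !![Real.cos z.2, -z.1 * Real.sin z.2; Real.sin z.2, z.1 * Real.cos z.2])) := ⟨_, rfl⟩
  have hf' : ∀ z ∈ A, HasFDerivWithinAt f (f' z) A z := by
    intro z _
    rw [hfdef, hf'def]
    exact ((hE _).comp z (hasFDerivAt_polarCoord_symm z)).hasFDerivWithinAt
  have hdet : ∀ z : ℝ × ℝ, (f' z).det = z.1 := by
    intro z
    rw [hf'def]
    simp only [ContinuousLinearMap.det, ContinuousLinearMap.toLinearMap_comp, hLdef,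
      LinearMap.coe_toContinuousLinearMap, LinearMap.det_comp, LinearMap.det_toLin,
      Matrix.det_fin_two_of]
    linear_combination (z.1 * (Real.cos z.2 ^ 2 + Real.sin z.2 ^ 2)) * Real.sin_sq_add_cos_sq θ₀
      + z.1 * Real.sin_sq_add_cos_sq z.2
  have hAsub' : A ⊆ polarCoord.symm.source := by
    rw [OpenPartialHomeomorph.symm_source]; exact hAsub
  have hinj : Set.InjOn f A := by
    rw [hfdef]
    exact Set.InjOn.comp (hEinj.injOn) (polarCoord.symm.injOn.mono hAsub')
      (Set.mapsTo_univ _ _)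
  have himage : volume (f '' A) = ∫⁻ z in A, ENNReal.ofReal z.1 := by
    rw [← setLIntegral_one, lintegral_image_eq_lintegral_abs_det_fderiv_mul volume hAmeas hf' hinj]
    apply setLIntegral_congr_fun hAmeas
    intro z hz
    have hz1 : 0 < z.1 := by
      rcases hz with ⟨-, h3, -⟩ | ⟨-, h3, -⟩ <;> exact h3
    beta_reduce
    rw [hdet, mul_one, abs_of_pos hz1]
  have hdisj : Disjoint (Aplus c (c/ρ) ρ) (Aminus c (c/ρ) ρ) := by
    rw [Set.disjoint_left]
    rintro z ⟨⟨h1, h2⟩, -⟩ ⟨hU, -⟩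
    rcases hU with ⟨h3, h4⟩ | ⟨h3, h4⟩ <;> linarith
  have hlint : ∫⁻ z in A, ENNReal.ofReal z.1 = ENNReal.ofReal (2 * c ^ 3 / (3 * ρ)) := by
    rw [hAdef, lintegral_union (measurable_Aminus _ _ _) hdisj,
      lint_slice hρ _ (measurable_Aplus c (c/ρ) ρ) (slice_plus hρ hc),
      lint_slice hρ _ (measurable_Aminus c (c/ρ) ρ) (slice_minus hρ hc ha'),
      ← ENNReal.ofReal_add (by positivity) (by positivity)]
    congr 1; ring
  -- embed into the plane
  set emb : Plane ≃ᵐ ℝ × ℝ :=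
    (MeasurableEquiv.toLp 2 (Fin 2 → ℝ)).symm.trans (MeasurableEquiv.finTwoArrow) with hembdef
  have hembmp : MeasurePreserving emb :=
    (volume_preserving_finTwoArrow ℝ).comp (EuclideanSpace.volume_preserving_symm_measurableEquiv_toLp (Fin 2))
  have hcoord0 : ∀ z : ℝ × ℝ, (emb.symm z) 0 = z.1 := fun z => rfl
  have hcoord1 : ∀ z : ℝ × ℝ, (emb.symm z) 1 = z.2 := fun z => rfl
  have hsub : emb ⁻¹' (f '' A) ⊆ reachDD wmax ρ p θ₀ t := by
    rintro q ⟨w, hwA, hwq⟩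
    have hq : emb.symm (f w) = q := by rw [hwq]; exact emb.symm_apply_apply q
    have hfw : f w = E (w.1 * Real.cos w.2, w.1 * Real.sin w.2) := by
      rw [hfdef, Function.comp_apply, polarCoord_symm_apply]
    have hq0 : q 0 = p 0 + (Real.cos θ₀ * (w.1 * Real.cos w.2)
        - Real.sin θ₀ * (w.1 * Real.sin w.2)) := by
      rw [← hq, hcoord0, hfw, hEapp]
    have hq1 : q 1 = p 1 + (Real.sin θ₀ * (w.1 * Real.cos w.2)
        + Real.cos θ₀ * (w.1 * Real.sin w.2)) := by
      rw [← hq, hcoord1, hfw, hEapp]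
    rcases hwA with ⟨⟨h1, h2⟩, h3, h4⟩ | ⟨hU, h3, h4⟩
    · -- forward petal : φ = w.2, d = w.1
      apply tau_le hw hρ p θ₀ (φ := w.2) (d := w.1) ?_ q ?_ ?_
      · rw [← hcdef]
        have : |w.2| < c/ρ := abs_lt.2 ⟨h1, h2⟩
        have h5 : |w.1| = w.1 := abs_of_pos h3
        nlinarith [abs_nonneg w.2]
      · rw [hq0, Real.cos_add]; ring
      · rw [hq1, Real.sin_add]; ring
    · -- backward petal : φ = w.2 ∓ π, d = -w.1
      obtain ⟨φ, hφdef⟩ : ∃ φ : ℝ, φ = if 0 ≤ w.2 then w.2 - π else w.2 + π := ⟨_, rfl⟩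
      have hcos : Real.cos (θ₀ + φ) = -Real.cos (θ₀ + w.2) := by
        rw [hφdef]; split
        · rw [show θ₀ + (w.2 - π) = θ₀ + w.2 - π by ring, Real.cos_sub_pi]
        · rw [show θ₀ + (w.2 + π) = θ₀ + w.2 + π by ring, Real.cos_add_pi]
      have hsin : Real.sin (θ₀ + φ) = -Real.sin (θ₀ + w.2) := by
        rw [hφdef]; split
        · rw [show θ₀ + (w.2 - π) = θ₀ + w.2 - π by ring, Real.sin_sub_pi]
        · rw [show θ₀ + (w.2 + π) = θ₀ + w.2 + π by ring, Real.sin_add_pi]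
      have hφabs : |φ| = π - |w.2| := by
        rw [hφdef]; split <;> rename_i hsgn
        · have hw2 : π - c/ρ < w.2 ∧ w.2 < π := by
            rcases hU with ⟨hu1, hu2⟩ | ⟨hu1, hu2⟩
            · exfalso; nlinarith
            · exact ⟨hu1, hu2⟩
          rw [abs_of_nonpos (by linarith [hw2.2]), abs_of_nonneg hsgn]; ring
        · push_neg at hsgn
          have hw2 : -π < w.2 ∧ w.2 < -(π - c/ρ) := by
            rcases hU with ⟨hu1, hu2⟩ | ⟨hu1, hu2⟩
            · exact ⟨hu1, hu2⟩
            · exfalso; nlinarith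
          rw [abs_of_nonneg (by linarith [hw2.1]), abs_of_neg hsgn]; ring
      apply tau_le hw hρ p θ₀ (φ := φ) (d := -w.1) ?_ q ?_ ?_
      · rw [← hcdef, hφabs, abs_neg, abs_of_pos h3]
        linarith
      · rw [hq0, hcos, Real.cos_add]; ring
      · rw [hq1, hsin, Real.sin_add]; ring
  calc ENNReal.ofReal (2 * (wmax * t) ^ 3 / (3 * ρ))
      = ∫⁻ z in A, ENNReal.ofReal z.1 := by rw [hlint, hcdef]
    _ = volume (f '' A) := himage.symm
    _ = volume (emb ⁻¹' (f '' A)) := by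
        rw [hembmp.measure_preimage
          (measurable_image_of_fderivWithin hAmeas hf' hinj).nullMeasurableSet]
    _ ≤ volume (reachDD wmax ρ p θ₀ t) := measure_mono hsub


end AuxDD

/-- small-time lower bound on the area of the reachable set of a DD robot:
`liminf_{t→0⁺} Area(R_t(g)) / t³ ≥ 2 w_max³ / (3ρ)`. -/
theorem dd_reachable_area_lower_bound
    (wmax ρ : ℝ) (hw : 0 < wmax) (hρ : 0 < ρ) (p : Plane) (θ₀ : ℝ) :
    ENNReal.ofReal (2 * wmax ^ 3 / (3 * ρ)) ≤
      Filter.liminf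
        (fun t : ℝ => volume (reachDD wmax ρ p θ₀ t) / ENNReal.ofReal (t ^ 3))
        (𝓝[>] 0) := by

  have hπ := Real.pi_pos
  apply le_liminf_of_le (by isBoundedDefault)
  have hε : (0:ℝ) < π * ρ / (2 * wmax) := by positivity
  filter_upwards [Ioo_mem_nhdsGT hε] with t ht
  obtain ⟨ht0, htε⟩ := ht
  have ha : wmax * t / ρ ≤ π / 2 := by
    rw [div_le_div_iff₀ hρ (by norm_num : (0:ℝ) < 2)]
    rw [lt_div_iff₀ (by positivity)] at htε
    nlinarith
  have key := volume_reach_ge hw hρ p θ₀ ht0 ha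
  rw [ENNReal.le_div_iff_mul_le (Or.inl ?_) (Or.inl ?_)]
  · calc ENNReal.ofReal (2 * wmax ^ 3 / (3 * ρ)) * ENNReal.ofReal (t ^ 3)
        = ENNReal.ofReal (2 * wmax ^ 3 / (3 * ρ) * t ^ 3) := by
          rw [← ENNReal.ofReal_mul (by positivity)]
      _ = ENNReal.ofReal (2 * (wmax * t) ^ 3 / (3 * ρ)) := by congr 1; ring
      _ ≤ volume (reachDD wmax ρ p θ₀ t) := key
  · simp [ENNReal.ofReal_eq_zero]; positivity
  · exact ENNReal.ofReal_ne_top
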